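/- The generalized amplitude damping channel satisfies the semigroup-type relation D_{p,t}ⁿ = D_{pⁿ,t} for every n ≥ 1; consequently, for 0 < p < 1 no finite iterate of D_{p,t} is coherence breaking, i.e., its coherence breaking index is infinite. -/
import Mathlib


open Matrix

/-- A qubit channel given in the Bloch picture by the pair `(M, n)` is coherence breaking
iff the first two rows of `M` and the first two components of `n` vanish. -/
def CBpair (M : Matrix (Fin 3) (Fin 3) ℝ) (v : Fin 3 → ℝ) : Prop :=
  (∀ j, M 0 j = 0 ∧ M 1 j = 0) ∧ v 0 = 0 ∧ v 1 = 0

/-- Bloch-picture matrix of the generalized amplitude damping channel `D_{p,t}`. -/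
noncomputable def Mgad (p : ℝ) : Matrix (Fin 3) (Fin 3) ℝ :=
  Matrix.diagonal ![Real.sqrt p, Real.sqrt p, p]

/-- Bloch-picture translation vector of the generalized amplitude damping channel `D_{p,t}`. -/
noncomputable def ngad (p t : ℝ) : Fin 3 → ℝ :=
  ![0, 0, (1 - p) * (2 * t - 1)]

lemma sqrt_pow'' {p : ℝ} (hp : 0 ≤ p) (n : ℕ) : Real.sqrt (p ^ n) = Real.sqrt p ^ n := by
  induction n with
  | zero => simp
  | succ k ih => rw [pow_succ, Real.sqrt_mul (pow_nonneg hp k), ih, pow_succ]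

lemma Mgad_pow (p : ℝ) (hp : 0 ≤ p) (n : ℕ) : Mgad p ^ n = Mgad (p ^ n) := by
  unfold Mgad
  rw [Matrix.diagonal_pow]
  have hv : (![Real.sqrt p, Real.sqrt p, p] : Fin 3 → ℝ) ^ n
      = ![Real.sqrt p ^ n, Real.sqrt p ^ n, p ^ n] := by
    funext i; fin_cases i <;> simp
  rw [hv]
  congr 1
  funext i
  fin_cases i <;> simp [sqrt_pow'' hp]
/-- The generalized amplitude damping channel satisfies `D_{p,t}ⁿ = D_{pⁿ,t}`
(its `n`-fold Bloch iterate is represented by `(Mgad (pⁿ), ngad (pⁿ) t)`); consequently, for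
`0 < p < 1` no finite iterate of `D_{p,t}` is coherence breaking: the coherence breaking
index is infinite. -/
theorem gad_semigroup_and_never_coherence_breaking (p t : ℝ)
    (hp0 : 0 < p) (hp1 : p < 1) (ht0 : 0 ≤ t) (ht1 : t ≤ 1) :
    (∀ n : ℕ, Mgad p ^ n = Mgad (p ^ n) ∧
      (∑ k ∈ Finset.range n, Mgad p ^ k).mulVec (ngad p t) = ngad (p ^ n) t) ∧
    ∀ n : ℕ, 1 ≤ n → ¬ CBpair (Mgad (p ^ n)) (ngad (p ^ n) t) := by
  constructor
  · intro n
    refine ⟨Mgad_pow p hp0.le n, ?_⟩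
    have hs : (∑ k ∈ Finset.range n, Mgad p ^ k) *ᵥ ngad p t
        = ∑ k ∈ Finset.range n, (Mgad p ^ k) *ᵥ ngad p t := by
      induction n with
      | zero => simp [Matrix.zero_mulVec]
      | succ m ih =>
          rw [Finset.sum_range_succ, Finset.sum_range_succ, Matrix.add_mulVec, ih]
    rw [hs]
    funext i
    have hg : (∑ k ∈ Finset.range n, p ^ k) * (p - 1) = p ^ n - 1 := geom_sum_mul p n
    have hrw : ∀ k, (Mgad p ^ k).mulVec (ngad p t) i
        = ![Real.sqrt (p ^ k), Real.sqrt (p ^ k), p ^ k] i * ngad p t i := by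
      intro k
      rw [Mgad_pow p hp0.le k, Mgad, Matrix.mulVec_diagonal]
    rw [Finset.sum_apply, Finset.sum_congr rfl fun k _ => hrw k]
    fin_cases i <;> simp [ngad, ← Finset.sum_mul] <;> nlinarith [hg]
  · intro n hn hCB
    have h00 : Mgad (p ^ n) 0 0 = Real.sqrt (p ^ n) := by simp [Mgad]
    have := (hCB.1 0).1
    rw [h00] at this
    have hpn : 0 < p ^ n := pow_pos hp0 n
    have := Real.sqrt_pos.mpr hpn
    linarith
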